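/- Consider a discrete memoryless channel with input alphabet {0,1,...,m} and channel law P(Y=y | X=x) = C(m,y)·(xθ/m)^y·(1−xθ/m)^{m−y} for θ ∈ (0,1). Any input distribution P maximizing I(X;Y) satisfies P(0) > 0. -/

import Mathlib

open Real Finset

/-- The binomial particle-intensity channel law:
`P(Y = y | X = x) = C(m,y) (xθ/m)^y (1 − xθ/m)^{m−y}`. -/
noncomputable def picChannel (m : ℕ) (θ : ℝ) (x y : ℕ) : ℝ :=
  (m.choose y : ℝ) * ((x : ℝ) * θ / m) ^ y * (1 - (x : ℝ) * θ / m) ^ (m - y)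

/-- The output marginal of the channel under input distribution `P`. -/
noncomputable def picOut (m : ℕ) (θ : ℝ) (P : ℕ → ℝ) (y : ℕ) : ℝ :=
  ∑ x ∈ range (m + 1), P x * picChannel m θ x y

/-- The mutual information `I(X;Y)` (in bits) of the channel `picChannel m θ`
under input distribution `P` on `{0,…,m}`, with the convention `0 log 0 = 0`
(satisfied by `Real.logb`). -/
noncomputable def picMutInfo (m : ℕ) (θ : ℝ) (P : ℕ → ℝ) : ℝ :=
  ∑ x ∈ range (m + 1), ∑ y ∈ range (m + 1),
    P x * picChannel m θ x y *
      Real.logb 2 (picChannel m θ x y / picOut m θ P y)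

/-- `P` is a probability mass function on `{0,…,m}`. -/
def IsPMFOn (m : ℕ) (P : ℕ → ℝ) : Prop :=
  (∀ x, 0 ≤ P x) ∧ ∑ x ∈ range (m + 1), P x = 1 ∧ ∀ x, m < x → P x = 0

lemma pic_mpos {m : ℕ} (hm : 1 ≤ m) : (0:ℝ) < m := by exact_mod_cast hm

lemma pic_lam_nonneg {m x : ℕ} {θ : ℝ} (hθ0 : 0 < θ) : 0 ≤ (x:ℝ) * θ / m := by positivity

lemma pic_lam_le {m x : ℕ} {θ : ℝ} (hm : 1 ≤ m) (hθ0 : 0 < θ) (hx : x ≤ m) :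
    (x:ℝ) * θ / m ≤ θ := by
  have hm0 : (0:ℝ) < m := pic_mpos hm
  rw [div_le_iff₀ hm0]
  have hxm : (x:ℝ) ≤ m := by exact_mod_cast hx
  nlinarith

lemma picChannel_nonneg {m x y : ℕ} {θ : ℝ} (hm : 1 ≤ m) (hθ0 : 0 < θ) (hθ1 : θ < 1)
    (hx : x ≤ m) : 0 ≤ picChannel m θ x y := by
  unfold picChannel
  have h1 : (x:ℝ) * θ / m ≤ θ := pic_lam_le hm hθ0 hx
  have h2 : 0 ≤ (x:ℝ) * θ / m := pic_lam_nonneg hθ0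
  have h3 : 0 ≤ 1 - (x:ℝ) * θ / m := by linarith
  positivity

lemma picChannel_pos {m x y : ℕ} {θ : ℝ} (hm : 1 ≤ m) (hθ0 : 0 < θ) (hθ1 : θ < 1)
    (hx1 : 1 ≤ x) (hx : x ≤ m) (hy : y ≤ m) : 0 < picChannel m θ x y := by
  unfold picChannel
  have hm0 : (0:ℝ) < m := pic_mpos hm
  have hx0 : (1:ℝ) ≤ (x:ℝ) := by exact_mod_cast hx1
  have h2 : 0 < (x:ℝ) * θ / m := by positivity
  have h1 : (x:ℝ) * θ / m ≤ θ := pic_lam_le hm hθ0 hx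
  have h3 : 0 < 1 - (x:ℝ) * θ / m := by linarith
  have hc : 0 < (m.choose y : ℝ) := by exact_mod_cast Nat.choose_pos hy
  positivity

lemma picChannel_sum (m : ℕ) (θ : ℝ) (x : ℕ) :
    ∑ y ∈ range (m + 1), picChannel m θ x y = 1 := by
  have h := add_pow ((x:ℝ) * θ / m) (1 - (x:ℝ) * θ / m) m
  have h2 : ((x:ℝ) * θ / m + (1 - (x:ℝ) * θ / m)) = 1 := by ring
  rw [h2, one_pow] at h
  calc ∑ y ∈ range (m + 1), picChannel m θ x y
      = ∑ y ∈ range (m + 1),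
        ((x:ℝ) * θ / m) ^ y * (1 - (x:ℝ) * θ / m) ^ (m - y) * (m.choose y : ℝ) := by
        apply sum_congr rfl; intro y _; unfold picChannel; ring
    _ = 1 := h.symm

lemma picChannel_zero_pos {m : ℕ} {θ : ℝ} : picChannel m θ 0 0 = 1 := by
  simp [picChannel]

lemma picChannel_zero_of_ne {m y : ℕ} {θ : ℝ} (hy : y ≠ 0) : picChannel m θ 0 y = 0 := by
  simp [picChannel, zero_pow hy]

lemma picOut_sum {m : ℕ} {θ : ℝ} {P : ℕ → ℝ} (hP : ∑ x ∈ range (m + 1), P x = 1) :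
    ∑ y ∈ range (m + 1), picOut m θ P y = 1 := by
  unfold picOut
  rw [Finset.sum_comm]
  calc ∑ x ∈ range (m + 1), ∑ y ∈ range (m + 1), P x * picChannel m θ x y
      = ∑ x ∈ range (m + 1), P x * ∑ y ∈ range (m + 1), picChannel m θ x y := by
        apply sum_congr rfl; intro x _; rw [Finset.mul_sum]
    _ = ∑ x ∈ range (m + 1), P x := by
        apply sum_congr rfl; intro x _; rw [picChannel_sum, mul_one]
    _ = 1 := hP

lemma picOut_pos {m x₀ y : ℕ} {θ : ℝ} {P : ℕ → ℝ} (hm : 1 ≤ m) (hθ0 : 0 < θ) (hθ1 : θ < 1)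
    (hPnn : ∀ x, 0 ≤ P x) (hx₀1 : 1 ≤ x₀) (hx₀m : x₀ ≤ m) (hx₀ : 0 < P x₀) (hy : y ≤ m) :
    0 < picOut m θ P y := by
  unfold picOut
  apply Finset.sum_pos'
  · intro x hx
    exact mul_nonneg (hPnn x) (picChannel_nonneg hm hθ0 hθ1 (Nat.lt_succ_iff.mp (mem_range.mp hx)))
  · exact ⟨x₀, mem_range.mpr (Nat.lt_succ_of_le hx₀m),
      mul_pos hx₀ (picChannel_pos hm hθ0 hθ1 hx₀1 hx₀m hy)⟩

noncomputable def picIDiv (m : ℕ) (θ : ℝ) (P : ℕ → ℝ) (x : ℕ) : ℝ :=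
  ∑ y ∈ range (m + 1),
    picChannel m θ x y * Real.logb 2 (picChannel m θ x y / picOut m θ P y)

lemma picMutInfo_eq (m : ℕ) (θ : ℝ) (P : ℕ → ℝ) :
    picMutInfo m θ P = ∑ x ∈ range (m + 1), P x * picIDiv m θ P x := by
  unfold picMutInfo picIDiv
  apply sum_congr rfl; intro x _
  rw [Finset.mul_sum]; apply sum_congr rfl; intro y _; ring

lemma picIDiv_le (m : ℕ) (hm : 1 ≤ m) (θ : ℝ) (hθ0 : 0 < θ) (hθ1 : θ < 1)
    (P : ℕ → ℝ) (hPnn : ∀ x, 0 ≤ P x) (hPsum : ∑ x ∈ range (m + 1), P x = 1)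
    (hPtail : ∀ x, m < x → P x = 0)
    (x₀ : ℕ) (hx₀1 : 1 ≤ x₀) (hx₀m : x₀ ≤ m) (hx₀ : 0 < P x₀)
    (hopt : ∀ Q : ℕ → ℝ, IsPMFOn m Q → picMutInfo m θ Q ≤ picMutInfo m θ P)
    (b : ℕ) (hb : b ≤ m) :
    picIDiv m θ P b ≤ picMutInfo m θ P := by
  set C2 := Real.log 2 with hC2
  have hC2pos : 0 < C2 := Real.log_pos one_lt_two
  have hPYpos : ∀ y, y ≤ m → 0 < picOut m θ P y :=
    fun y hy => picOut_pos hm hθ0 hθ1 hPnn hx₀1 hx₀m hx₀ hy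
  have hbmem : b ∈ range (m + 1) := mem_range.mpr (Nat.lt_succ_of_le hb)
  set K : ℝ := ∑ y ∈ range (m + 1),
      picChannel m θ b y * (picChannel m θ b y / picOut m θ P y - 1) with hK
  have main : ∀ ε : ℝ, 0 < ε → ε < 1 →
      picIDiv m θ P b - picMutInfo m θ P ≤ ε * (K / C2) := by
    intro ε hε0 hε1
    set Q : ℕ → ℝ := fun x => (1 - ε) * P x + (if x = b then ε else 0) with hQdef
    have hQnn : ∀ x, 0 ≤ Q x := by
      intro x
      have h1 : 0 ≤ (1 - ε) * P x := mul_nonneg (by linarith) (hPnn x)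
      simp only [hQdef]
      split_ifs <;> linarith
    have hQpmf : IsPMFOn m Q := by
      refine ⟨hQnn, ?_, ?_⟩
      · simp only [hQdef]
        rw [Finset.sum_add_distrib, ← Finset.mul_sum, hPsum,
          Finset.sum_ite_eq' (range (m + 1)) b (fun _ => ε), if_pos hbmem]
        ring
      · intro x hx
        have h1 : P x = 0 := hPtail x hx
        have h2 : x ≠ b := by omega
        simp [hQdef, h1, h2]
    have hQY : ∀ y, picOut m θ Q y
        = (1 - ε) * picOut m θ P y + ε * picChannel m θ b y := by
      intro y
      unfold picOut
      calc ∑ x ∈ range (m + 1), Q x * picChannel m θ x y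
          = ∑ x ∈ range (m + 1), ((1 - ε) * (P x * picChannel m θ x y)
              + (if x = b then ε * picChannel m θ b y else 0)) := by
            apply sum_congr rfl; intro x _
            by_cases h : x = b
            · subst h
              simp only [hQdef, if_pos rfl, eq_self_iff_true, if_true]
              ring
            · simp only [hQdef, if_neg h]; ring
        _ = (1 - ε) * ∑ x ∈ range (m + 1), P x * picChannel m θ x y
              + ε * picChannel m θ b y := by
            rw [Finset.sum_add_distrib, ← Finset.mul_sum,
              Finset.sum_ite_eq' (range (m + 1)) b (fun _ => ε * picChannel m θ b y),
              if_pos hbmem]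
    have key : ∀ c w py wb : ℝ, 0 ≤ c → 0 ≤ w → 0 < py → 0 ≤ wb →
        c * w * Real.logb 2 (w / py) - ε / C2 * (c * (w * (wb / py - 1)))
          ≤ c * w * Real.logb 2 (w / ((1 - ε) * py + ε * wb)) := by
      intro c w py wb hc hw hpy hwb
      rcases eq_or_lt_of_le hc with hc0 | hcpos
      · simp [← hc0]
      rcases eq_or_lt_of_le hw with hw0 | hwpos
      · simp [← hw0]
      have hqy : 0 < (1 - ε) * py + ε * wb := by nlinarith
      have hu : (0:ℝ) < ((1 - ε) * py + ε * wb) / py := div_pos hqy hpy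
      have hlb : Real.logb 2 (((1 - ε) * py + ε * wb) / py)
          ≤ (((1 - ε) * py + ε * wb) / py - 1) / C2 := by
        rw [Real.logb, ← hC2]
        exact (div_le_div_iff_of_pos_right hC2pos).mpr (Real.log_le_sub_one_of_pos hu)
      have heq : ((1 - ε) * py + ε * wb) / py - 1 = ε * (wb / py - 1) := by
        field_simp
        ring
      rw [heq] at hlb
      have hlog : Real.logb 2 (w / py) - Real.logb 2 (w / ((1 - ε) * py + ε * wb))
          ≤ ε * (wb / py - 1) / C2 := by
        rw [Real.logb_div (ne_of_gt hwpos) (ne_of_gt hpy),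
          Real.logb_div (ne_of_gt hwpos) (ne_of_gt hqy)]
        have h2 : Real.logb 2 (((1 - ε) * py + ε * wb) / py)
            = Real.logb 2 ((1 - ε) * py + ε * wb) - Real.logb 2 py :=
          Real.logb_div (ne_of_gt hqy) (ne_of_gt hpy)
        linarith [hlb, h2.symm.le, h2.le]
      have hmul := mul_le_mul_of_nonneg_left hlog (le_of_lt (mul_pos hcpos hwpos))
      rw [mul_sub] at hmul
      have hrw : ε / C2 * (c * (w * (wb / py - 1)))
          = c * w * (ε * (wb / py - 1) / C2) := by ring
      rw [hrw]
      linarith [hmul]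
    have lower : ∑ x ∈ range (m + 1), ∑ y ∈ range (m + 1),
        (Q x * picChannel m θ x y
            * Real.logb 2 (picChannel m θ x y / picOut m θ P y)
          - ε / C2 * (Q x * (picChannel m θ x y
              * (picChannel m θ b y / picOut m θ P y - 1))))
        ≤ picMutInfo m θ Q := by
      unfold picMutInfo
      apply Finset.sum_le_sum; intro x hx
      apply Finset.sum_le_sum; intro y hy
      rw [hQY y]
      exact key (Q x) (picChannel m θ x y) (picOut m θ P y) (picChannel m θ b y)
        (hQnn x) (picChannel_nonneg hm hθ0 hθ1 (Nat.lt_succ_iff.mp (mem_range.mp hx)))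
        (hPYpos y (Nat.lt_succ_iff.mp (mem_range.mp hy))) (picChannel_nonneg hm hθ0 hθ1 hb)
    have hsplit : ∑ x ∈ range (m + 1), ∑ y ∈ range (m + 1),
        (Q x * picChannel m θ x y
            * Real.logb 2 (picChannel m θ x y / picOut m θ P y)
          - ε / C2 * (Q x * (picChannel m θ x y
              * (picChannel m θ b y / picOut m θ P y - 1))))
        = (∑ x ∈ range (m + 1), ∑ y ∈ range (m + 1),
            Q x * picChannel m θ x y
              * Real.logb 2 (picChannel m θ x y / picOut m θ P y))
          - ε / C2 * (∑ x ∈ range (m + 1), ∑ y ∈ range (m + 1),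
            Q x * (picChannel m θ x y
              * (picChannel m θ b y / picOut m θ P y - 1))) := by
      rw [Finset.mul_sum, ← Finset.sum_sub_distrib]
      apply sum_congr rfl; intro x _
      rw [Finset.mul_sum, ← Finset.sum_sub_distrib]
    have hA : ∑ x ∈ range (m + 1), ∑ y ∈ range (m + 1),
        Q x * picChannel m θ x y * Real.logb 2 (picChannel m θ x y / picOut m θ P y)
        = (1 - ε) * picMutInfo m θ P + ε * picIDiv m θ P b := by
      calc ∑ x ∈ range (m + 1), ∑ y ∈ range (m + 1),
          Q x * picChannel m θ x y * Real.logb 2 (picChannel m θ x y / picOut m θ P y)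
          = ∑ x ∈ range (m + 1), Q x * picIDiv m θ P x := by
            apply sum_congr rfl; intro x _
            unfold picIDiv
            rw [Finset.mul_sum]
            apply sum_congr rfl; intro y _; ring
        _ = ∑ x ∈ range (m + 1), ((1 - ε) * (P x * picIDiv m θ P x)
              + (if x = b then ε * picIDiv m θ P b else 0)) := by
            apply sum_congr rfl; intro x _
            by_cases h : x = b
            · subst h
              simp only [hQdef, if_pos rfl, eq_self_iff_true, if_true]
              ring
            · simp only [hQdef, if_neg h]; ring
        _ = (1 - ε) * picMutInfo m θ P + ε * picIDiv m θ P b := by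
            rw [Finset.sum_add_distrib, ← Finset.mul_sum, ← picMutInfo_eq,
              Finset.sum_ite_eq' (range (m + 1)) b (fun _ => ε * picIDiv m θ P b),
              if_pos hbmem]
    have hB : ∑ x ∈ range (m + 1), ∑ y ∈ range (m + 1),
        Q x * (picChannel m θ x y * (picChannel m θ b y / picOut m θ P y - 1))
        = ε * K := by
      rw [Finset.sum_comm]
      calc ∑ y ∈ range (m + 1), ∑ x ∈ range (m + 1),
          Q x * (picChannel m θ x y * (picChannel m θ b y / picOut m θ P y - 1))
          = ∑ y ∈ range (m + 1),
              picOut m θ Q y * (picChannel m θ b y / picOut m θ P y - 1) := by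
            apply sum_congr rfl; intro y _
            unfold picOut
            rw [Finset.sum_mul]
            apply sum_congr rfl; intro x _; ring
        _ = ∑ y ∈ range (m + 1), ((1 - ε) * (picChannel m θ b y - picOut m θ P y)
              + ε * (picChannel m θ b y * (picChannel m θ b y / picOut m θ P y - 1))) := by
            apply sum_congr rfl; intro y hy
            rw [hQY y]
            have hpy : picOut m θ P y ≠ 0 :=
              ne_of_gt (hPYpos y (Nat.lt_succ_iff.mp (mem_range.mp hy)))
            field_simp
        _ = ε * K := by
            rw [Finset.sum_add_distrib, ← Finset.mul_sum, ← Finset.mul_sum,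
              Finset.sum_sub_distrib, picChannel_sum, picOut_sum hPsum, hK]
            ring
    rw [hsplit, hA, hB] at lower
    have hQle := hopt Q hQpmf
    have h7 : (1 - ε) * picMutInfo m θ P + ε * picIDiv m θ P b - ε / C2 * (ε * K)
        ≤ picMutInfo m θ P := le_trans lower hQle
    have hexp : (1 - ε) * picMutInfo m θ P + ε * picIDiv m θ P b - ε / C2 * (ε * K)
        = picMutInfo m θ P + ε * (picIDiv m θ P b - picMutInfo m θ P)
          - ε * (ε * (K / C2)) := by
      ring
    rw [hexp] at h7
    have h8 : ε * (picIDiv m θ P b - picMutInfo m θ P) ≤ ε * (ε * (K / C2)) := by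
      linarith
    exact (mul_le_mul_iff_right₀ hε0).mp h8
  rcases le_or_gt (K / C2) 0 with hKC | hKC
  · have h := main (1/2) (by norm_num) (by norm_num)
    nlinarith
  · by_contra hcon
    push_neg at hcon
    have hdpos : 0 < picIDiv m θ P b - picMutInfo m θ P := by linarith
    set d := picIDiv m θ P b - picMutInfo m θ P with hd
    set ε := min (1/2 : ℝ) (d / (2 * (K / C2))) with hε
    have hε0 : 0 < ε := lt_min (by norm_num) (by positivity)
    have hε1 : ε < 1 := lt_of_le_of_lt (min_le_left _ _) (by norm_num)
    have h := main ε hε0 hε1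
    have h3 : ε ≤ d / (2 * (K / C2)) := min_le_right _ _
    have h2 : ε * (K / C2) ≤ d / 2 := by
      calc ε * (K / C2) ≤ (d / (2 * (K / C2))) * (K / C2) :=
            mul_le_mul_of_nonneg_right h3 (le_of_lt hKC)
        _ = d / 2 := by
            have hKpos : 0 < K := by
              have h9 := mul_pos hKC hC2pos
              rwa [div_mul_cancel₀ _ (ne_of_gt hC2pos)] at h9
            field_simp
    linarith

/-- Any input distribution maximizing the mutual information of the binomial
particle-intensity channel puts positive mass on the symbol `0`. -/
theorem pic_optimal_input_pos_at_zero
    (m : ℕ) (hm : 1 ≤ m) (θ : ℝ) (hθ : θ ∈ Set.Ioo (0 : ℝ) 1)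
    (P : ℕ → ℝ) (hP : IsPMFOn m P)
    (hopt : ∀ Q : ℕ → ℝ, IsPMFOn m Q → picMutInfo m θ Q ≤ picMutInfo m θ P) :
    0 < P 0 := by
  obtain ⟨hθ0, hθ1⟩ := hθ
  obtain ⟨hPnn, hPsum, hPtail⟩ := hP
  by_contra hneg
  have hP0 : P 0 = 0 := le_antisymm (not_lt.mp hneg) (hPnn 0)
  have hs : ∃ x ∈ range (m + 1), P x ≠ 0 := by
    by_contra h
    push_neg at h
    rw [Finset.sum_eq_zero h] at hPsum
    norm_num at hPsum
  set s := (range (m + 1)).filter (fun x => P x ≠ 0) with hsdef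
  have hsne : s.Nonempty := by
    obtain ⟨x, hx1, hx2⟩ := hs
    exact ⟨x, mem_filter.mpr ⟨hx1, hx2⟩⟩
  set a := s.min' hsne with ha
  have haS : a ∈ s := Finset.min'_mem s hsne
  have haP : P a ≠ 0 := (mem_filter.mp haS).2
  have ham : a ≤ m := Nat.lt_succ_iff.mp (mem_range.mp (mem_filter.mp haS).1)
  have ha1 : 1 ≤ a := by
    rcases Nat.eq_zero_or_pos a with h | h
    · rw [h] at haP; exact absurd hP0 haP
    · exact h
  have haPos : 0 < P a := lt_of_le_of_ne (hPnn a) (Ne.symm haP)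
  have hmin : ∀ x, x ≤ m → P x ≠ 0 → a ≤ x := fun x hx hPx =>
    Finset.min'_le s x (mem_filter.mpr ⟨mem_range.mpr (Nat.lt_succ_of_le hx), hPx⟩)
  have hIle : ∀ b, b ≤ m → picIDiv m θ P b ≤ picMutInfo m θ P := fun b hb =>
    picIDiv_le m hm θ hθ0 hθ1 P hPnn hPsum hPtail a ha1 ham haPos hopt b hb
  have havg : picMutInfo m θ P ≤ picIDiv m θ P a := by
    by_contra hlt
    push_neg at hlt
    have h1 : ∑ x ∈ range (m + 1), P x * picIDiv m θ P x
        < ∑ x ∈ range (m + 1), P x * picMutInfo m θ P := by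
      apply Finset.sum_lt_sum
      · intro i hi
        exact mul_le_mul_of_nonneg_left
          (hIle i (Nat.lt_succ_iff.mp (mem_range.mp hi))) (hPnn i)
      · exact ⟨a, mem_range.mpr (Nat.lt_succ_of_le ham),
          mul_lt_mul_of_pos_left hlt haPos⟩
    rw [← picMutInfo_eq, ← Finset.sum_mul, hPsum, one_mul] at h1
    exact lt_irrefl _ h1
  have hPYpos : ∀ y, y ≤ m → 0 < picOut m θ P y :=
    fun y hy => picOut_pos hm hθ0 hθ1 hPnn ha1 ham haPos hy
  have hp0pos : 0 < picOut m θ P 0 := hPYpos 0 (Nat.zero_le m)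
  have hm0 : (0:ℝ) < m := pic_mpos hm
  set lam := (a:ℝ) * θ / m with hlam
  have hlam0 : 0 < lam := by
    have h1 : (1:ℝ) ≤ (a:ℝ) := by exact_mod_cast ha1
    rw [hlam]; positivity
  have hlamθ : lam ≤ θ := pic_lam_le hm hθ0 ham
  have hlam1 : lam < 1 := lt_of_le_of_lt hlamθ hθ1
  have h1lam : 0 < 1 - lam := by linarith
  have hi0 : picIDiv m θ P 0 = Real.logb 2 (1 / picOut m θ P 0) := by
    unfold picIDiv
    rw [Finset.sum_eq_single_of_mem 0 (mem_range.mpr (Nat.succ_pos m))]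
    · rw [picChannel_zero_pos, one_mul]
    · intro y _ hy0
      rw [picChannel_zero_of_ne hy0, zero_mul]
  set r := lam / (1 - lam) with hr
  have hrpos : 0 < r := div_pos hlam0 h1lam
  clear_value lam r
  have hPYlb : ∀ y ∈ range (m + 1),
      picOut m θ P 0 * ((m.choose y : ℝ) * r ^ y) ≤ picOut m θ P y := by
    intro y hy
    have hym : y ≤ m := Nat.lt_succ_iff.mp (mem_range.mp hy)
    have hstep : picOut m θ P 0 * ((m.choose y : ℝ) * r ^ y)
        = ∑ x ∈ range (m + 1),
            P x * picChannel m θ x 0 * ((m.choose y : ℝ) * r ^ y) := by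
      unfold picOut
      rw [Finset.sum_mul]
    rw [hstep]
    unfold picOut
    apply Finset.sum_le_sum
    intro x hx
    have hxm : x ≤ m := Nat.lt_succ_iff.mp (mem_range.mp hx)
    rcases eq_or_ne (P x) 0 with h0 | h0
    · simp [h0]
    · have hax : a ≤ x := hmin x hxm h0
      set lx := (x:ℝ) * θ / m with hlx
      have hlx0 : 0 ≤ lx := pic_lam_nonneg hθ0
      have hlx1 : lx < 1 := lt_of_le_of_lt (pic_lam_le hm hθ0 hxm) hθ1
      have h1lx : 0 ≤ 1 - lx := by linarith
      have hlamle : lam ≤ lx := by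
        have hax' : (a:ℝ) ≤ (x:ℝ) := by exact_mod_cast hax
        rw [hlam, hlx]
        have h2 : (a:ℝ) * θ ≤ (x:ℝ) * θ := mul_le_mul_of_nonneg_right hax' hθ0.le
        exact (div_le_div_iff_of_pos_right hm0).mpr h2
      have h_le : (1 - lx) * r ≤ lx := by
        rw [hr, ← mul_div_assoc, div_le_iff₀ h1lam]
        nlinarith
      have hW0 : picChannel m θ x 0 = (1 - lx) ^ m := by
        simp [picChannel, hlx]
      have hcore : picChannel m θ x 0 * ((m.choose y : ℝ) * r ^ y)
          ≤ picChannel m θ x y := by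
        rw [hW0]
        have hCnn : (0:ℝ) ≤ (m.choose y : ℝ) := by positivity
        have hpow : (1 - lx) ^ (m - y) * (1 - lx) ^ y = (1 - lx) ^ m :=
          pow_sub_mul_pow (1 - lx) hym
        calc (1 - lx) ^ m * ((m.choose y : ℝ) * r ^ y)
            = (m.choose y : ℝ) * ((1 - lx) ^ (m - y) * ((1 - lx) * r) ^ y) := by
              rw [← hpow, mul_pow]; ring
          _ ≤ (m.choose y : ℝ) * ((1 - lx) ^ (m - y) * lx ^ y) := by
              apply mul_le_mul_of_nonneg_left _ hCnn
              apply mul_le_mul_of_nonneg_left _ (pow_nonneg h1lx _)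
              exact pow_le_pow_left₀ (mul_nonneg h1lx hrpos.le) h_le y
          _ = picChannel m θ x y := by
              unfold picChannel
              rw [← hlx]; ring
      calc P x * picChannel m θ x 0 * ((m.choose y : ℝ) * r ^ y)
          = P x * (picChannel m θ x 0 * ((m.choose y : ℝ) * r ^ y)) := by ring
        _ ≤ P x * picChannel m θ x y :=
            mul_le_mul_of_nonneg_left hcore (hPnn x)
  have hiA : picIDiv m θ P a
      ≤ (m:ℝ) * Real.logb 2 (1 - lam) + Real.logb 2 (1 / picOut m θ P 0) := by
    have hco : ∀ y ∈ range (m + 1),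
        picChannel m θ a y * Real.logb 2 (picChannel m θ a y / picOut m θ P y)
        ≤ picChannel m θ a y *
            ((m:ℝ) * Real.logb 2 (1 - lam) + Real.logb 2 (1 / picOut m θ P 0)) := by
      intro y hy
      have hym : y ≤ m := Nat.lt_succ_iff.mp (mem_range.mp hy)
      have hWpos : 0 < picChannel m θ a y := picChannel_pos hm hθ0 hθ1 ha1 ham hym
      have hCpos : (0:ℝ) < (m.choose y : ℝ) := by
        exact_mod_cast Nat.choose_pos hym
      have hlbpos : 0 < picOut m θ P 0 * ((m.choose y : ℝ) * r ^ y) := by positivity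
      have hEq : picChannel m θ a y / (picOut m θ P 0 * ((m.choose y : ℝ) * r ^ y))
          = (1 - lam) ^ m * (1 / picOut m θ P 0) := by
        have hpow : (1 - lam) ^ (m - y) * (1 - lam) ^ y = (1 - lam) ^ m :=
          pow_sub_mul_pow (1 - lam) hym
        have hWa : picChannel m θ a y
            = (m.choose y : ℝ) * lam ^ y * (1 - lam) ^ (m - y) := by
          rw [hlam]; rfl
        rw [hWa, hr, div_pow, ← hpow]
        have hCne : (m.choose y : ℝ) ≠ 0 := ne_of_gt hCpos
        field_simp
      have hmono : Real.logb 2 (picChannel m θ a y / picOut m θ P y)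
          ≤ Real.logb 2 ((1 - lam) ^ m * (1 / picOut m θ P 0)) := by
        rw [← hEq]
        apply Real.logb_le_logb_of_le one_lt_two
          (div_pos hWpos (hPYpos y hym))
        exact (div_le_div_iff_of_pos_left hWpos (hPYpos y hym) hlbpos).mpr (hPYlb y hy)
      calc picChannel m θ a y * Real.logb 2 (picChannel m θ a y / picOut m θ P y)
          ≤ picChannel m θ a y * Real.logb 2 ((1 - lam) ^ m * (1 / picOut m θ P 0)) :=
            mul_le_mul_of_nonneg_left hmono hWpos.le
        _ = picChannel m θ a y *
              ((m:ℝ) * Real.logb 2 (1 - lam) + Real.logb 2 (1 / picOut m θ P 0)) := by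
            rw [Real.logb_mul (by positivity) (by positivity), Real.logb_pow]
    calc picIDiv m θ P a
        ≤ ∑ y ∈ range (m + 1), picChannel m θ a y *
            ((m:ℝ) * Real.logb 2 (1 - lam) + Real.logb 2 (1 / picOut m θ P 0)) := by
          unfold picIDiv
          exact Finset.sum_le_sum hco
      _ = (m:ℝ) * Real.logb 2 (1 - lam) + Real.logb 2 (1 / picOut m θ P 0) := by
          rw [← Finset.sum_mul, picChannel_sum, one_mul]
  have hlogneg : Real.logb 2 (1 - lam) < 0 :=
    Real.logb_neg one_lt_two (by linarith) (by linarith)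
  have hmlog : (m:ℝ) * Real.logb 2 (1 - lam) < 0 := mul_neg_of_pos_of_neg hm0 hlogneg
  have h0le := hIle 0 (Nat.zero_le m)
  rw [hi0] at h0le
  linarith [havg, hiA, h0le, hmlog]
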